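/- Define K₀(d) = I(d)⁻¹·(2d²(2d+1))^{−d/(d−1)} with I(d) = ∫₀^∞ exp(−x^{(d−1)/d}) dx, and π̲₁(β) = (1/p₁ + (q₁/p₁)·I·C₂^{−d/(d−1)})⁻¹ where λ = 1+β, p₁ = 2dλ/((2d−1)+(2d+1)λ), q₁ = 1−p₁, and C₂ = (λ−1)/(d(2d+1)(1+(2d−1)λ)). Then π̲₁(β) ∼ K₀(d)·β^{d/(d−1)} as β → 0. -/

import Mathlib

open Filter MeasureTheory

/-- Integrability of `exp (-x^c)` on `(0,∞)` for `c ≥ 1/2`. -/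
lemma aux_integrableOn_exp_neg_rpow {c : ℝ} (hc : 1 / 2 ≤ c) :
    IntegrableOn (fun x : ℝ => Real.exp (-(x ^ c))) (Set.Ioi (0 : ℝ)) := by
  have hc0 : 0 < c := lt_of_lt_of_le (by norm_num) hc
  have hcont : Continuous fun x : ℝ => Real.exp (-(x ^ c)) :=
    Real.continuous_exp.comp ((continuous_id.rpow_const fun x => Or.inr hc0.le).neg)
  rw [← Set.Ioc_union_Ioi_eq_Ioi (zero_le_one (α := ℝ)), integrableOn_union]
  constructor
  · exact hcont.integrableOn_Ioc
  · have hint : IntegrableOn (fun x : ℝ => 6 * x ^ (-(3 * c))) (Set.Ioi (1 : ℝ)) :=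
      (integrableOn_Ioi_rpow_of_lt (by linarith) one_pos).const_mul 6
    refine Integrable.mono' hint hcont.aestronglyMeasurable.restrict ?_
    filter_upwards [ae_restrict_mem measurableSet_Ioi] with x hx
    have hx0 : (0 : ℝ) < x := lt_trans one_pos hx
    have hy : (0 : ℝ) < x ^ c := Real.rpow_pos_of_pos hx0 c
    have hcube : (x ^ c) ^ (3 : ℕ) / 6 ≤ Real.exp (x ^ c) := by
      have hs := Real.sum_le_exp_of_nonneg hy.le 4
      simp [Finset.sum_range_succ, Nat.factorial] at hs
      nlinarith [hy.le, sq_nonneg (x ^ c)]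
    have hcube' : (x ^ c) ^ (3 : ℕ) = x ^ (3 * c) := by
      rw [← Real.rpow_natCast (x ^ c) 3, ← Real.rpow_mul hx0.le]
      norm_num [mul_comm]
    have hxc3 : (0 : ℝ) < x ^ (3 * c) := Real.rpow_pos_of_pos hx0 _
    rw [Real.norm_eq_abs, abs_of_pos (Real.exp_pos _), Real.exp_neg,
      Real.rpow_neg hx0.le]
    rw [hcube'] at hcube
    rw [inv_le_comm₀ (Real.exp_pos _) (by positivity)]
    calc (6 * (x ^ (3 * c))⁻¹)⁻¹ = x ^ (3 * c) / 6 := by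
          rw [mul_inv, inv_inv]; ring
      _ ≤ Real.exp (x ^ c) := hcube


lemma aux_alg {I m a b p : ℝ} (hI : 0 < I) (hm : 0 < m) (ha : 0 < a) (hb : 0 < b)
    (hp : 0 < p) :
    (I⁻¹ * m⁻¹ * a / p + ((1 - p) / p) * (a / b) * m⁻¹)⁻¹ =
    (1 / p + ((1 - p) / p) * I * b⁻¹)⁻¹ / (I⁻¹ * m⁻¹ * a) := by
  have h1 : (1 / p + ((1 - p) / p) * I * b⁻¹) * (I⁻¹ * m⁻¹ * a)
      = I⁻¹ * m⁻¹ * a / p + ((1 - p) / p) * (a / b) * m⁻¹ := by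
    field_simp
  rw [div_eq_mul_inv ((1 / p + ((1 - p) / p) * I * b⁻¹)⁻¹) (I⁻¹ * m⁻¹ * a),
    ← mul_inv (1 / p + ((1 - p) / p) * I * b⁻¹) (I⁻¹ * m⁻¹ * a), h1]

set_option maxHeartbeats 1000000 in
/-- With `I(d) = ∫₀^∞ exp(−x^{(d−1)/d}) dx`, `K₀(d) = I(d)⁻¹ (2d²(2d+1))^{−d/(d−1)}`,
`λ = 1+β`, `p₁ = 2dλ/((2d−1)+(2d+1)λ)`, `q₁ = 1−p₁`,
`C₂ = (λ−1)/(d(2d+1)(1+(2d−1)λ))`, the lower bound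
`π̲₁(β) = (1/p₁ + (q₁/p₁)·I·C₂^{−d/(d−1)})⁻¹` satisfies
`π̲₁(β) ∼ K₀(d)·β^{d/(d−1)}` as `β → 0⁺`. -/
theorem stmt_16 (d : ℕ) (hd : 2 ≤ d)
    (I K₀ : ℝ) (p₁ C₂ π₁ : ℝ → ℝ)
    (hI : I = ∫ x in Set.Ioi (0 : ℝ), Real.exp (-(x ^ (((d : ℝ) - 1) / d))))
    (hK₀ : K₀ = I⁻¹ * (2 * (d : ℝ) ^ 2 * (2 * (d : ℝ) + 1)) ^ (-(d : ℝ) / ((d : ℝ) - 1)))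
    (hp₁ : ∀ β, p₁ β =
      2 * (d : ℝ) * (1 + β) / ((2 * (d : ℝ) - 1) + (2 * (d : ℝ) + 1) * (1 + β)))
    (hC₂ : ∀ β, C₂ β =
      β / ((d : ℝ) * (2 * (d : ℝ) + 1) * (1 + (2 * (d : ℝ) - 1) * (1 + β))))
    (hπ₁ : ∀ β, π₁ β =
      (1 / p₁ β + ((1 - p₁ β) / p₁ β) * I * (C₂ β) ^ (-(d : ℝ) / ((d : ℝ) - 1)))⁻¹) :
    Tendsto (fun β : ℝ => π₁ β / (K₀ * β ^ ((d : ℝ) / ((d : ℝ) - 1))))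
      (nhdsWithin 0 (Set.Ioi 0)) (nhds 1) := by
  have hd2 : (2 : ℝ) ≤ (d : ℝ) := by exact_mod_cast hd
  have hd0 : (0 : ℝ) < (d : ℝ) := by linarith
  set α : ℝ := (d : ℝ) / ((d : ℝ) - 1) with hα_def
  have hα : 0 < α := div_pos hd0 (by linarith)
  have hneg : -(d : ℝ) / ((d : ℝ) - 1) = -α := by rw [hα_def, neg_div]
  set M : ℝ := 2 * (d : ℝ) ^ 2 * (2 * (d : ℝ) + 1) with hM_def
  have hM : 0 < M := by positivity
  -- positivity of I
  have hc : (1 : ℝ) / 2 ≤ ((d : ℝ) - 1) / d := by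
    rw [div_le_div_iff₀ (by norm_num) hd0]; linarith
  have hIint : IntegrableOn (fun x : ℝ => Real.exp (-(x ^ (((d : ℝ) - 1) / d))))
      (Set.Ioi (0 : ℝ)) := aux_integrableOn_exp_neg_rpow hc
  have hIpos : 0 < I := by
    rw [hI]
    rw [setIntegral_pos_iff_support_of_nonneg_ae
      (Filter.Eventually.of_forall fun x => (Real.exp_pos _).le) hIint]
    have hsupp : (Function.support fun x : ℝ => Real.exp (-(x ^ (((d : ℝ) - 1) / d))))
        = Set.univ := by
      ext x; simp [Function.mem_support, (Real.exp_pos _).ne']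
    rw [hsupp, Set.univ_inter]
    simp [Real.volume_Ioi]
  have hK₀' : K₀ = I⁻¹ * (M ^ α)⁻¹ := by
    rw [hK₀, hneg, Real.rpow_neg hM.le, hM_def]
  have hK₀pos : 0 < K₀ := by
    rw [hK₀']; positivity
  -- limits of the building blocks
  have hp_lim : Tendsto p₁ (nhdsWithin 0 (Set.Ioi 0)) (nhds (1 / 2)) := by
    have hct : ContinuousAt (fun β : ℝ =>
        2 * (d : ℝ) * (1 + β) / ((2 * (d : ℝ) - 1) + (2 * (d : ℝ) + 1) * (1 + β))) 0 := by
      apply ContinuousAt.div (by fun_prop) (by fun_prop)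
      show (2 * (d : ℝ) - 1) + (2 * (d : ℝ) + 1) * (1 + 0) ≠ 0
      nlinarith
    have hval : 2 * (d : ℝ) * (1 + 0) / ((2 * (d : ℝ) - 1) + (2 * (d : ℝ) + 1) * (1 + 0))
        = 1 / 2 := by
      have hden0 : (2 * (d : ℝ) - 1) + (2 * (d : ℝ) + 1) * (1 + 0) = 4 * d := by ring
      rw [hden0, div_eq_div_iff (by positivity) (by norm_num)]; ring
    have h2 := hct.tendsto.mono_left (nhdsWithin_le_nhds (s := Set.Ioi (0:ℝ)))
    rw [hval] at h2
    exact h2.congr fun β => (hp₁ β).symm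
  have hq_lim : Tendsto (fun β => (1 - p₁ β) / p₁ β) (nhdsWithin 0 (Set.Ioi 0))
      (nhds 1) := by
    have := ((tendsto_const_nhds (x := (1:ℝ))).sub hp_lim).div hp_lim (by norm_num)
    norm_num at this
    exact this
  have hR_lim : Tendsto (fun β => β / C₂ β) (nhdsWithin 0 (Set.Ioi 0)) (nhds M) := by
    have hct : ContinuousAt (fun β : ℝ =>
        (d : ℝ) * (2 * (d : ℝ) + 1) * (1 + (2 * (d : ℝ) - 1) * (1 + β))) 0 := by fun_prop
    have hval : (d : ℝ) * (2 * (d : ℝ) + 1) * (1 + (2 * (d : ℝ) - 1) * (1 + 0)) = M := by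
      rw [hM_def]; ring
    have h1 := hct.tendsto.mono_left (nhdsWithin_le_nhds (s := Set.Ioi (0:ℝ)))
    rw [hval] at h1
    refine h1.congr' ?_
    filter_upwards [self_mem_nhdsWithin] with β (hβ : 0 < β)
    rw [hC₂, div_div_eq_mul_div, mul_div_right_comm, div_self hβ.ne', one_mul]
  have hRα_lim : Tendsto (fun β => (β / C₂ β) ^ α) (nhdsWithin 0 (Set.Ioi 0))
      (nhds (M ^ α)) :=
    ((Real.continuousAt_rpow_const M α (Or.inl hM.ne')).tendsto).comp hR_lim
  have hβα_lim : Tendsto (fun β : ℝ => β ^ α) (nhdsWithin 0 (Set.Ioi 0)) (nhds 0) := by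
    have := ((Real.continuousAt_rpow_const 0 α (Or.inr hα.le)).tendsto).mono_left
      (nhdsWithin_le_nhds (s := Set.Ioi (0:ℝ)))
    rwa [Real.zero_rpow hα.ne'] at this
  -- the simplified expression
  have hMα : 0 < M ^ α := Real.rpow_pos_of_pos hM α
  have key : Tendsto (fun β : ℝ =>
      (K₀ * β ^ α / p₁ β + ((1 - p₁ β) / p₁ β) * (β / C₂ β) ^ α * M ^ (-α))⁻¹)
      (nhdsWithin 0 (Set.Ioi 0)) (nhds 1) := by
    have h1 : Tendsto (fun β : ℝ => K₀ * β ^ α / p₁ β) (nhdsWithin 0 (Set.Ioi 0))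
        (nhds 0) := by
      have := (tendsto_const_nhds (x := K₀).mul hβα_lim).div hp_lim (by norm_num)
      norm_num at this
      exact this
    have h2 : Tendsto (fun β : ℝ => ((1 - p₁ β) / p₁ β) * (β / C₂ β) ^ α * M ^ (-α))
        (nhdsWithin 0 (Set.Ioi 0)) (nhds 1) := by
      have := (hq_lim.mul hRα_lim).mul_const (M ^ (-α))
      have hMM : M ^ α * M ^ (-α) = 1 := by
        rw [← Real.rpow_add hM]; simp
      rw [one_mul, hMM] at this
      exact this
    have hsum := h1.add h2
    rw [zero_add] at hsum
    have := hsum.inv₀ (by norm_num)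
    norm_num at this
    exact this
  refine key.congr' ?_
  filter_upwards [self_mem_nhdsWithin] with β (hβ : 0 < β)
  -- algebraic identity for β > 0
  have hDen : (0 : ℝ) < (2 * (d : ℝ) - 1) + (2 * (d : ℝ) + 1) * (1 + β) := by nlinarith
  have hp : 0 < p₁ β := by
    rw [hp₁]; exact div_pos (by nlinarith) hDen
  have hC : 0 < C₂ β := by
    rw [hC₂]
    refine div_pos hβ (mul_pos (mul_pos hd0 (by linarith)) ?_)
    nlinarith
  have hβα : 0 < β ^ α := Real.rpow_pos_of_pos hβ α
  have hCα : 0 < C₂ β ^ α := Real.rpow_pos_of_pos hC α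
  have hCneg : C₂ β ^ (-α) = (C₂ β ^ α)⁻¹ := Real.rpow_neg hC.le α
  have hMneg : M ^ (-α) = (M ^ α)⁻¹ := Real.rpow_neg hM.le α
  have hdivα : (β / C₂ β) ^ α = β ^ α / C₂ β ^ α := Real.div_rpow hβ.le hC.le α
  rw [hπ₁ β, hneg, hCneg, hMneg, hdivα, hK₀']
  exact aux_alg hIpos hMα hβα hCα hp
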